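/- The expected number of unique samples drawn by oracle sampling satisfies E[|S|] ≤ 1 + B·ε, where ε = 1 − max_{1≤i≤n} w_i. -/

import Mathlib

open Finset

private lemma sum_prod_fn {B n : ℕ} (h : Fin B → Fin n → ℝ) :
    ∑ f : Fin B → Fin n, ∏ k, h k (f k) = ∏ k, ∑ i, h k i := by
  rw [Finset.prod_univ_sum, Fintype.piFinset_univ]

/-- **Expected computation budget of oracle sampling.**
`B` iid samples from the distribution `w` are modeled by summing over all tuples
`f : Fin B → Fin n` with probability `∏ j, w (f j)`; the set of unique samples is
`S = Finset.image f Finset.univ`. With `w i₀ = max_i w i` and `ε = 1 − w i₀`,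
the expected number of unique samples satisfies `E[|S|] ≤ 1 + B·ε`. -/
theorem expected_unique_samples_le
    {n : ℕ} (hn : 1 ≤ n) (w : Fin n → ℝ)
    (hw_nonneg : ∀ i, 0 ≤ w i) (hw_sum : ∑ i, w i = 1)
    (B : ℕ) (hB : 1 ≤ B)
    (i₀ : Fin n) (hmax : ∀ i, w i ≤ w i₀) :
    ∑ f : Fin B → Fin n,
        (∏ j, w (f j)) * ((Finset.image f Finset.univ).card : ℝ)
      ≤ 1 + (B : ℝ) * (1 - w i₀) := by
  set g : Fin n → ℝ := fun i => if i = i₀ then 0 else 1 with hg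
  -- cardinality bound
  have hcard : ∀ f : Fin B → Fin n,
      ((Finset.image f Finset.univ).card : ℝ) ≤ 1 + ∑ j, g (f j) := by
    intro f
    have hsub : Finset.image f Finset.univ ⊆
        insert i₀ (Finset.image f (Finset.univ.filter (fun j => f j ≠ i₀))) := by
      intro i hi
      obtain ⟨j, _, hj⟩ := Finset.mem_image.1 hi
      by_cases h : f j = i₀
      · simp [← hj, h]
      · exact Finset.mem_insert_of_mem (Finset.mem_image.2 ⟨j, by simp [h], hj⟩)
    have h1 : (Finset.image f Finset.univ).card ≤
        1 + (Finset.univ.filter (fun j => f j ≠ i₀)).card := by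
      calc (Finset.image f Finset.univ).card ≤ _ := Finset.card_le_card hsub
        _ ≤ 1 + (Finset.image f (Finset.univ.filter (fun j => f j ≠ i₀))).card :=
            (Finset.card_insert_le _ _).trans (by omega)
        _ ≤ _ := by gcongr; exact Finset.card_image_le
    have h2 : ∑ j, g (f j) = ((Finset.univ.filter (fun j => f j ≠ i₀)).card : ℝ) := by
      rw [hg]
      push_cast
      rw [Finset.card_filter]
      push_cast
      apply Finset.sum_congr rfl
      intro j _
      by_cases h : f j = i₀ <;> simp [h]
    rw [h2]
    exact_mod_cast h1
  have hP : ∀ f : Fin B → Fin n, 0 ≤ ∏ j, w (f j) :=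
    fun f => Finset.prod_nonneg (fun j _ => hw_nonneg _)
  calc ∑ f : Fin B → Fin n, (∏ j, w (f j)) * ((Finset.image f Finset.univ).card : ℝ)
      ≤ ∑ f : Fin B → Fin n, (∏ j, w (f j)) * (1 + ∑ j, g (f j)) := by
        exact Finset.sum_le_sum fun f _ => mul_le_mul_of_nonneg_left (hcard f) (hP f)
    _ = (∑ f : Fin B → Fin n, ∏ j, w (f j))
        + ∑ j, ∑ f : Fin B → Fin n, (∏ k, w (f k)) * g (f j) := by
        simp only [mul_add, mul_one, Finset.sum_add_distrib, Finset.mul_sum]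
        rw [Finset.sum_comm]
    _ = 1 + (B : ℝ) * (1 - w i₀) := by
        have hA : (∑ f : Fin B → Fin n, ∏ j, w (f j)) = 1 := by
          rw [sum_prod_fn fun _ i => w i]
          simp [hw_sum]
        have hgsum : ∑ i, w i * g i = 1 - w i₀ := by
          rw [hg]
          have : ∀ i : Fin n, w i * (if i = i₀ then (0:ℝ) else 1)
              = w i - (if i = i₀ then w i else 0) := by
            intro i; by_cases h : i = i₀ <;> simp [h]
          simp only [this, Finset.sum_sub_distrib, hw_sum, Finset.sum_ite_eq' Finset.univ i₀ w,
            Finset.mem_univ, if_true]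
        have hB' : ∀ j : Fin B,
            (∑ f : Fin B → Fin n, (∏ k, w (f k)) * g (f j)) = 1 - w i₀ := by
          intro j
          have heq : ∀ f : Fin B → Fin n, (∏ k, w (f k)) * g (f j)
              = ∏ k, (w (f k) * (if k = j then g (f k) else 1)) := by
            intro f
            rw [Finset.prod_mul_distrib, Finset.prod_ite_eq' Finset.univ j (fun k => g (f k))]
            simp
          simp only [heq]
          rw [sum_prod_fn fun k i => w i * (if k = j then g i else 1)]
          have : ∀ k : Fin B, (∑ i, w i * (if k = j then g i else 1))
              = if k = j then 1 - w i₀ else 1 := by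
            intro k; by_cases h : k = j <;> simp [h, hgsum, hw_sum]
          simp only [this]
          rw [Finset.prod_ite_eq' Finset.univ j (fun _ => 1 - w i₀)]
          simp
        rw [hA]
        simp only [hB']
        simp [mul_comm]
        ring
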